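/- The radical of the quadratic form q([[a,b],[c,a^t]]) = Tr(a) + ⟨Diag(b),Diag(c)⟩ on sp(2g,2), i.e., the set Y of elements in the radical of the associated bilinear form on which q vanishes, is the set of matrices [[a,b],[c,a^t]] ∈ sp(2g,2) with Diag(b) = Diag(c) = 0 and Tr(a) = 0; it is a subspace of dimension g(2g+1) - (2g+1). -/

import Mathlib

open Matrix

/-- The standard symplectic form matrix `J = [[0, I], [-I, 0]]`. -/
def Jmat (g : ℕ) (R : Type*) [CommRing R] :
    Matrix (Fin g ⊕ Fin g) (Fin g ⊕ Fin g) R :=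
  Matrix.fromBlocks 0 1 (-1) 0

/-- The symplectic Lie algebra `sp(2g, 𝔽₂)`. -/
def spSet2 (g : ℕ) : Set (Matrix (Fin g ⊕ Fin g) (Fin g ⊕ Fin g) (ZMod 2)) :=
  {Y | Jmat g (ZMod 2) * Y + Yᵀ * Jmat g (ZMod 2) = 0}

/-- `q([[a,b],[c,aᵀ]]) = Tr a + ⟨Diag b, Diag c⟩` on `sp(2g,2)`. -/
def qsp (g : ℕ) (Y : Matrix (Fin g ⊕ Fin g) (Fin g ⊕ Fin g) (ZMod 2)) : ZMod 2 :=
  (∑ i : Fin g, Y (Sum.inl i) (Sum.inl i)) +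
    ∑ i : Fin g, Y (Sum.inl i) (Sum.inr i) * Y (Sum.inr i) (Sum.inl i)

/-- The associated bilinear form
`b(Y, Y') = ⟨Diag b, Diag c'⟩ + ⟨Diag b', Diag c⟩`. -/
def bsp (g : ℕ) (Y Y' : Matrix (Fin g ⊕ Fin g) (Fin g ⊕ Fin g) (ZMod 2)) : ZMod 2 :=
  (∑ i : Fin g, Y (Sum.inl i) (Sum.inr i) * Y' (Sum.inr i) (Sum.inl i)) +
    ∑ i : Fin g, Y' (Sum.inl i) (Sum.inr i) * Y (Sum.inr i) (Sum.inl i)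


/-- The radical `Y` of the quadratic form `q` on `sp(2g,2)` (elements of the radical of
the polar form `b` on which `q` vanishes) consists exactly of the matrices
`[[a,b],[c,aᵀ]] ∈ sp(2g,2)` with `Diag b = Diag c = 0` and `Tr a = 0`; it is a subspace
of dimension `g(2g+1) - (2g+1)`. -/
lemma mneg {m n : Type*} (M : Matrix m n (ZMod 2)) : -M = M := by
  ext i j; exact CharTwo.neg_eq _

lemma madd {m n : Type*} (M N : Matrix m n (ZMod 2)) : M + N = 0 ↔ M = N := by
  rw [← mneg N, add_neg_eq_zero, mneg]

lemma sp_blocks_iff {g : ℕ} (A B C D : Matrix (Fin g) (Fin g) (ZMod 2)) :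
    fromBlocks A B C D ∈ spSet2 g ↔ C = Cᵀ ∧ B = Bᵀ ∧ D = Aᵀ := by
  simp only [spSet2, Set.mem_setOf_eq, Jmat, fromBlocks_transpose, fromBlocks_multiply,
    fromBlocks_add, zero_mul, one_mul, mul_zero, mul_one, mul_neg, neg_mul, add_zero, zero_add]
  rw [show (0 : Matrix (Fin g ⊕ Fin g) (Fin g ⊕ Fin g) (ZMod 2)) = fromBlocks 0 0 0 0 by
    simp, fromBlocks_inj]
  simp only [mneg, madd]
  constructor
  · rintro ⟨h1, h2, h3, h4⟩
    exact ⟨h1, h4, h2⟩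
  · rintro ⟨h1, h2, h3⟩
    exact ⟨h1, h3, by rw [h3, transpose_transpose], h2⟩

lemma sp_mem_iff {g : ℕ} (Y : Matrix (Fin g ⊕ Fin g) (Fin g ⊕ Fin g) (ZMod 2)) :
    Y ∈ spSet2 g ↔ (∀ i j, Y (Sum.inr i) (Sum.inl j) = Y (Sum.inr j) (Sum.inl i)) ∧
      (∀ i j, Y (Sum.inl i) (Sum.inr j) = Y (Sum.inl j) (Sum.inr i)) ∧
      (∀ i j, Y (Sum.inr i) (Sum.inr j) = Y (Sum.inl j) (Sum.inl i)) := by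
  conv_lhs => rw [← fromBlocks_toBlocks Y]
  rw [sp_blocks_iff]
  simp only [← Matrix.ext_iff, toBlocks₁₁, toBlocks₁₂, toBlocks₂₁, toBlocks₂₂,
    transpose_apply, of_apply]

lemma stdsym {g : ℕ} (i : Fin g) :
    (single i i (1 : ZMod 2))ᵀ = single i i 1 := by
  ext a b; simp [single, and_comm]

lemma rad_eq {g : ℕ} :
    {Y | Y ∈ spSet2 g ∧ (∀ Y' ∈ spSet2 g, bsp g Y Y' = 0) ∧ qsp g Y = 0} =
      {Y | Y ∈ spSet2 g ∧ (∀ i, Y (Sum.inl i) (Sum.inr i) = 0) ∧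
        (∀ i, Y (Sum.inr i) (Sum.inl i) = 0) ∧
        (∑ i : Fin g, Y (Sum.inl i) (Sum.inl i)) = 0} := by
  ext Y
  simp only [Set.mem_setOf_eq]
  constructor
  · rintro ⟨hsp, hb, hq⟩
    have hB : ∀ i, Y (Sum.inl i) (Sum.inr i) = 0 := by
      intro i
      have hm : fromBlocks 0 0 (single i i (1 : ZMod 2)) 0 ∈ spSet2 g := by
        rw [sp_blocks_iff]
        exact ⟨(stdsym i).symm, by simp, by simp⟩
      have := hb _ hm
      simpa [bsp, fromBlocks, single, Finset.sum_ite_eq] using this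
    have hC : ∀ i, Y (Sum.inr i) (Sum.inl i) = 0 := by
      intro i
      have hm : fromBlocks 0 (single i i (1 : ZMod 2)) 0 0 ∈ spSet2 g := by
        rw [sp_blocks_iff]
        exact ⟨by simp, (stdsym i).symm, by simp⟩
      have := hb _ hm
      simpa [bsp, fromBlocks, single, Finset.sum_ite_eq] using this
    refine ⟨hsp, hB, hC, ?_⟩
    have : qsp g Y = ∑ i : Fin g, Y (Sum.inl i) (Sum.inl i) := by
      simp [qsp, hB]
    rw [← this, hq]
  · rintro ⟨hsp, hB, hC, htr⟩
    refine ⟨hsp, ?_, ?_⟩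
    · intro Y' _; simp [bsp, hB, hC]
    · simp [qsp, hB, htr]

noncomputable def Phi (g : ℕ) :
    Matrix (Fin g ⊕ Fin g) (Fin g ⊕ Fin g) (ZMod 2) →ₗ[ZMod 2]
      (Matrix (Fin g ⊕ Fin g) (Fin g ⊕ Fin g) (ZMod 2) × (Fin g → ZMod 2) ×
        (Fin g → ZMod 2) × ZMod 2) where
  toFun Y := (Jmat g (ZMod 2) * Y + Yᵀ * Jmat g (ZMod 2),
    fun i => Y (Sum.inl i) (Sum.inr i), fun i => Y (Sum.inr i) (Sum.inl i),
    ∑ i : Fin g, Y (Sum.inl i) (Sum.inl i))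
  map_add' Y Z := by
    ext <;> simp [mul_add, add_mul, Matrix.add_apply, Finset.sum_add_distrib] <;> abel
  map_smul' c Y := by
    ext <;> simp [mul_smul_comm, smul_mul_assoc, Finset.mul_sum] <;> try abel

lemma ker_Phi_eq (g : ℕ) :
    (LinearMap.ker (Phi g) : Set (Matrix (Fin g ⊕ Fin g) (Fin g ⊕ Fin g) (ZMod 2))) =
      {Y | Y ∈ spSet2 g ∧ (∀ i, Y (Sum.inl i) (Sum.inr i) = 0) ∧
        (∀ i, Y (Sum.inr i) (Sum.inl i) = 0) ∧
        (∑ i : Fin g, Y (Sum.inl i) (Sum.inl i)) = 0} := by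
  ext Y
  simp only [SetLike.mem_coe, LinearMap.mem_ker, Phi, LinearMap.coe_mk, AddHom.coe_mk,
    Prod.mk_eq_zero, Set.mem_setOf_eq, spSet2, funext_iff, Pi.zero_apply]

abbrev Tdx (g : ℕ) := {p : Fin g × Fin g // p.2 < p.1}
abbrev Adx (g : ℕ) [NeZero g] := {x : Fin g × Fin g // x ≠ (0, 0)}
abbrev Sdx (g : ℕ) [NeZero g] := Adx g ⊕ Tdx g ⊕ Tdx g

/-- reconstruct the `A` block -/
def recA (g : ℕ) [NeZero g] (f : Sdx g → ZMod 2) : Matrix (Fin g) (Fin g) (ZMod 2) :=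
  fun i j =>
    if h : (i, j) = ((0 : Fin g), (0 : Fin g)) then
      ∑ k ∈ (Finset.univ.erase (0 : Fin g)).attach,
        f (Sum.inl ⟨(k.1, k.1), by
          have := Finset.mem_erase.mp k.2
          simp [Prod.ext_iff, this.1]⟩)
    else f (Sum.inl ⟨(i, j), h⟩)

/-- reconstruct a symmetric zero-diagonal block -/
def recS (g : ℕ) (f : Tdx g → ZMod 2) : Matrix (Fin g) (Fin g) (ZMod 2) :=
  fun i j =>
    if h : j < i then f ⟨(i, j), h⟩
    else if h' : i < j then f ⟨(j, i), h'⟩ else 0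

def psifun (g : ℕ) [NeZero g] (f : Sdx g → ZMod 2) :
    Matrix (Fin g ⊕ Fin g) (Fin g ⊕ Fin g) (ZMod 2) :=
  fromBlocks (recA g f) (recS g (f ∘ Sum.inr ∘ Sum.inl))
    (recS g (f ∘ Sum.inr ∘ Sum.inr)) (recA g f)ᵀ

def psi (g : ℕ) [NeZero g] :
    (Sdx g → ZMod 2) →ₗ[ZMod 2] Matrix (Fin g ⊕ Fin g) (Fin g ⊕ Fin g) (ZMod 2) where
  toFun := psifun g
  map_add' f f' := by
    ext (i | i) (j | j) <;>
      simp only [psifun, fromBlocks, recA, recS, of_apply, Sum.elim_inl, Sum.elim_inr,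
        transpose_apply, Matrix.add_apply, Pi.add_apply, Function.comp_apply] <;>
      split_ifs <;>
      simp [Finset.sum_add_distrib]
  map_smul' c f := by
    ext (i | i) (j | j) <;>
      simp only [psifun, fromBlocks, recA, recS, of_apply, Sum.elim_inl, Sum.elim_inr,
        transpose_apply, Matrix.smul_apply, Pi.smul_apply, Function.comp_apply,
        RingHom.id_apply, smul_eq_mul] <;>
      split_ifs <;>
      simp [Finset.mul_sum]

lemma psi_inj (g : ℕ) [NeZero g] : Function.Injective (psi g) := by
  rw [injective_iff_map_eq_zero]
  intro f hf
  have happ : ∀ x y, psifun g f x y = 0 := by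
    intro x y
    have : psi g f x y = 0 := by rw [hf]; rfl
    exact this
  funext x
  rcases x with ⟨⟨i, j⟩, h⟩ | (⟨⟨i, j⟩, h⟩ | ⟨⟨i, j⟩, h⟩)
  · have := happ (Sum.inl i) (Sum.inl j)
    simp only [psifun, fromBlocks, of_apply, Sum.elim_inl, recA] at this
    rwa [dif_neg h] at this
  · have := happ (Sum.inl i) (Sum.inr j)
    simpa [psifun, fromBlocks, recS, dif_pos h] using this
  · have := happ (Sum.inr i) (Sum.inl j)
    simpa [psifun, fromBlocks, recS, dif_pos h] using this

lemma ztwo (a b : ZMod 2) (h : a + b = 0) : b = a := by revert h; revert a b; decide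

lemma recS_symm (g : ℕ) (f : Tdx g → ZMod 2) : (recS g f)ᵀ = recS g f := by
  ext i j
  simp only [transpose_apply, recS]
  rcases lt_trichotomy i j with h | h | h
  · rw [dif_pos h, dif_neg (not_lt.mpr h.le), dif_pos h]
  · subst h; simp
  · rw [dif_neg (not_lt.mpr h.le), dif_pos h, dif_pos h]

lemma recA_trace (g : ℕ) [NeZero g] (f : Sdx g → ZMod 2) :
    ∑ i : Fin g, recA g f i i = 0 := by
  have key : recA g f 0 0 = ∑ i ∈ Finset.univ.erase (0 : Fin g), recA g f i i := by
    rw [show recA g f 0 0 = ∑ k ∈ (Finset.univ.erase (0 : Fin g)).attach,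
        f (Sum.inl ⟨(k.1, k.1), by
          have := Finset.mem_erase.mp k.2
          simp [Prod.ext_iff, this.1]⟩) from dif_pos rfl]
    rw [← Finset.sum_attach (Finset.univ.erase (0 : Fin g)) (fun i => recA g f i i)]
    refine Finset.sum_congr rfl fun k _ => ?_
    have hk : k.1 ≠ 0 := (Finset.mem_erase.mp k.2).1
    rw [show recA g f k.1 k.1 = f (Sum.inl ⟨(k.1, k.1), by simp [Prod.ext_iff, hk]⟩) from
      dif_neg (by simp [Prod.ext_iff, hk])]
  rw [← Finset.add_sum_erase _ _ (Finset.mem_univ (0 : Fin g)), key,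
    CharTwo.add_self_eq_zero]

lemma range_psi (g : ℕ) [NeZero g] :
    LinearMap.range (psi g) = LinearMap.ker (Phi g) := by
  have hker := ker_Phi_eq g
  apply SetLike.coe_injective
  rw [hker]
  ext Y
  constructor
  · rintro ⟨f, rfl⟩
    show psifun g f ∈ _
    have hd : ∀ i, recS g (f ∘ Sum.inr ∘ Sum.inl) i i = 0 := by
      intro i; simp [recS]
    have hd' : ∀ i, recS g (f ∘ Sum.inr ∘ Sum.inr) i i = 0 := by
      intro i; simp [recS]
    refine ⟨?_, ?_, ?_, ?_⟩
    · rw [psifun, sp_blocks_iff]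
      exact ⟨(recS_symm g _).symm, (recS_symm g _).symm, rfl⟩
    · intro i; exact hd i
    · intro i; exact hd' i
    · exact recA_trace g f
  · rintro ⟨hsp, hB, hC, htr⟩
    obtain ⟨hCsym, hBsym, hD⟩ := (sp_mem_iff Y).mp hsp
    set f : Sdx g → ZMod 2 := fun x => Sum.rec (fun p => Y (Sum.inl p.1.1) (Sum.inl p.1.2))
      (fun y => Sum.rec (fun p => Y (Sum.inl p.1.1) (Sum.inr p.1.2))
        (fun p => Y (Sum.inr p.1.1) (Sum.inl p.1.2)) y) x with hfdef
    refine ⟨f, ?_⟩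
    have hA : ∀ i j, recA g f i j = Y (Sum.inl i) (Sum.inl j) := by
      intro i j
      rw [recA]
      split_ifs with h
      · obtain ⟨hi, hj⟩ := Prod.mk.injEq .. ▸ h
        subst hi; subst hj
        rw [Finset.sum_attach (Finset.univ.erase (0 : Fin g))
          (fun k => Y (Sum.inl k) (Sum.inl k))]
        exact ztwo _ _ ((Finset.add_sum_erase _ _ (Finset.mem_univ (0 : Fin g))).trans htr)
      · rfl
    show psifun g f = Y
    funext x y
    rcases x with i | i <;> rcases y with j | j
    · exact hA i j
    · show recS g _ i j = _
      rw [recS]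
      split_ifs with h h'
      · rfl
      · exact hBsym j i
      · have : i = j := le_antisymm (not_lt.mp h) (not_lt.mp h')
        subst this
        exact (hB i).symm
    · show recS g _ i j = _
      rw [recS]
      split_ifs with h h'
      · rfl
      · exact hCsym j i
      · have : i = j := le_antisymm (not_lt.mp h) (not_lt.mp h')
        subst this
        exact (hC i).symm
    · show recA g f j i = _
      rw [hA j i]
      exact (hD i j).symm

def tdxEquiv (g : ℕ) : Tdx g ≃ Σ i : Fin g, Fin i.1 where
  toFun p := ⟨p.1.1, ⟨p.1.2.1, p.2⟩⟩
  invFun q := ⟨(q.1, ⟨q.2.1, lt_trans q.2.2 q.1.2⟩), q.2.2⟩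
  left_inv p := rfl
  right_inv q := rfl

lemma card_Tdx (g : ℕ) : Fintype.card (Tdx g) * 2 = g * (g - 1) := by
  rw [Fintype.card_congr (tdxEquiv g), Fintype.card_sigma]
  simp only [Fintype.card_fin]
  rw [show ∑ x : Fin g, (x : ℕ) = ∑ i ∈ Finset.range g, i from
    Fin.sum_univ_eq_sum_range (fun i => i) g, Finset.sum_range_id_mul_two]

lemma card_Adx (g : ℕ) [NeZero g] : Fintype.card (Adx g) = g * g - 1 := by
  rw [Fintype.card_subtype_compl, Fintype.card_subtype_eq, Fintype.card_prod,
    Fintype.card_fin]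

lemma card_Sdx (g : ℕ) (hg : 1 ≤ g) [NeZero g] :
    Fintype.card (Sdx g) = g * (2 * g + 1) - (2 * g + 1) := by
  rw [Fintype.card_sum, Fintype.card_sum, card_Adx]
  have h2t := card_Tdx g
  obtain ⟨k, rfl⟩ : ∃ k, g = k + 1 := ⟨g - 1, by omega⟩
  have e1 : (k + 1) * (k + 1) = k * k + 2 * k + 1 := by ring
  have e2 : (k + 1) * (k + 1 - 1) = k * k + k := by simp; ring
  have e3 : (k + 1) * (2 * (k + 1) + 1) = 2 * (k * k) + 5 * k + 3 := by ring
  omega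


/-- The radical `Y` of the quadratic form `q` on `sp(2g,2)` (elements of the radical of
the polar form `b` on which `q` vanishes) consists exactly of the matrices
`[[a,b],[c,aᵀ]] ∈ sp(2g,2)` with `Diag b = Diag c = 0` and `Tr a = 0`; it is a subspace
of dimension `g(2g+1) - (2g+1)`. -/
theorem stmt13 (g : ℕ) (hg : 1 ≤ g) :
    {Y | Y ∈ spSet2 g ∧ (∀ Y' ∈ spSet2 g, bsp g Y Y' = 0) ∧ qsp g Y = 0} =
      {Y | Y ∈ spSet2 g ∧ (∀ i, Y (Sum.inl i) (Sum.inr i) = 0) ∧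
        (∀ i, Y (Sum.inr i) (Sum.inl i) = 0) ∧ (∑ i : Fin g, Y (Sum.inl i) (Sum.inl i)) = 0} ∧
    ∃ W : Submodule (ZMod 2) (Matrix (Fin g ⊕ Fin g) (Fin g ⊕ Fin g) (ZMod 2)),
      (W : Set (Matrix (Fin g ⊕ Fin g) (Fin g ⊕ Fin g) (ZMod 2))) =
        {Y | Y ∈ spSet2 g ∧ (∀ Y' ∈ spSet2 g, bsp g Y Y' = 0) ∧ qsp g Y = 0} ∧
      Nonempty (Module.Basis (Fin (g * (2 * g + 1) - (2 * g + 1))) (ZMod 2) W) := by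
  haveI : NeZero g := ⟨by omega⟩
  refine ⟨rad_eq, LinearMap.ker (Phi g), ?_, ?_⟩
  · rw [ker_Phi_eq]; exact rad_eq.symm
  · exact ⟨((Pi.basisFun (ZMod 2) (Sdx g)).map
      ((LinearEquiv.ofInjective (psi g) (psi_inj g)).trans
        (LinearEquiv.ofEq _ _ (range_psi g)))).reindex
      (Fintype.equivFinOfCardEq (card_Sdx g hg))⟩
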